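/- Let τ = τ((Y_i)_{1≤i≤D}) ∈ {0,…,D} be any measurable data-dependent index in the Gaussian sequence model. Then for every m ∈ {1,…,D}, if V_m ≥ 200·R(μ,τ)², then P_μ(τ ≥ m) ≤ 0.9. -/

import Mathlib

open MeasureTheory ProbabilityTheory Real Finset

/-- The risk `R(μ,τ)² = E_μ[‖μ̂^(τ) − μ‖²]` of the truncated SVD estimator with a
data-dependent truncation index `τ`, in the Gaussian sequence model
`Y_i = λ_i μ_i + δ ε_i`, `i = 1, …, D` (data outside `{1,…,D}` is set to `0`). -/
noncomputable def svdRisk {Ω : Type*} [MeasurableSpace Ω] (P : Measure Ω) (D : ℕ)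
    (lam : ℕ → ℝ) (δ : ℝ) (ε : ℕ → Ω → ℝ) (τ : (ℕ → ℝ) → ℕ) (ν : ℕ → ℝ) : ℝ :=
  ∫ ω, ∑ i ∈ Finset.Icc 1 D,
    ((if i ≤ τ (fun j => if 1 ≤ j ∧ j ≤ D then lam j * ν j + δ * ε j ω else 0)
        then (lam i)⁻¹ * (lam i * ν i + δ * ε i ω) else 0) - ν i) ^ 2 ∂P

open Set
open scoped ENNReal NNReal

lemma myint_pow_exp (n : ℕ) :
    Integrable (fun x : ℝ => x ^ n * rexp (-2⁻¹ * x ^ 2)) := by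
  have h := integrable_rpow_mul_exp_neg_mul_sq (b := 2⁻¹) (by norm_num) (s := (n : ℝ))
    (neg_one_lt_zero.trans_le (Nat.cast_nonneg n))
  simpa [Real.rpow_natCast] using h

lemma mygauss_moment (n : ℕ) :
    ∫ x : ℝ, x ^ (2 * n) * rexp (-2⁻¹ * x ^ 2)
      = 2 * (2⁻¹ ^ (-(2 * (n:ℝ) + 1) / 2) * (1 / 2) * Real.Gamma ((2 * (n:ℝ) + 1) / 2)) := by
  have habs : ∀ x : ℝ, (fun t : ℝ => t ^ (2 * n) * rexp (-2⁻¹ * t ^ 2)) |x|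
      = x ^ (2 * n) * rexp (-2⁻¹ * x ^ 2) := by
    intro x
    simp only [pow_mul, sq_abs]
  have h2 := integral_comp_abs (f := fun t : ℝ => t ^ (2 * n) * rexp (-2⁻¹ * t ^ 2))
  simp only [habs] at h2
  have h3 := integral_rpow_mul_exp_neg_mul_rpow (p := 2) (q := ((2 * n : ℕ) : ℝ))
    (b := 2⁻¹) two_pos (neg_one_lt_zero.trans_le (Nat.cast_nonneg _)) (by norm_num)
  have h4 : ∫ x in Ioi (0:ℝ), x ^ ((2 * n : ℕ) : ℝ) * rexp (-2⁻¹ * x ^ (2:ℝ))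
      = ∫ x in Ioi (0:ℝ), x ^ (2 * n) * rexp (-2⁻¹ * x ^ 2) := by
    refine setIntegral_congr_fun measurableSet_Ioi (fun x _ => ?_)
    rw [show (2:ℝ) = ((2:ℕ):ℝ) by norm_num, Real.rpow_natCast, Real.rpow_natCast]
  rw [← h4, h3] at h2
  rw [h2]
  push_cast
  ring_nf

lemma myrpow_inv_neg (y : ℝ) : (2:ℝ)⁻¹ ^ (-y) = 2 ^ y := by
  rw [Real.inv_rpow (by norm_num : (0:ℝ) ≤ 2), Real.rpow_neg (by norm_num : (0:ℝ) ≤ 2), inv_inv]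



lemma myGamma32 : Real.Gamma (3 / 2) = Real.sqrt π / 2 := by
  rw [show (3/2 : ℝ) = 1/2 + 1 by norm_num, Real.Gamma_add_one (by norm_num),
    Real.Gamma_one_half_eq]
  ring

lemma myGamma52 : Real.Gamma (5 / 2) = 3 * Real.sqrt π / 4 := by
  rw [show (5/2 : ℝ) = 3/2 + 1 by norm_num, Real.Gamma_add_one (by norm_num), myGamma32]
  ring

lemma myrpow32 : (2:ℝ) ^ ((3:ℝ)/2) = 2 * Real.sqrt 2 := by
  rw [show (3/2:ℝ) = 1 + 1/2 by norm_num, Real.rpow_add two_pos, Real.rpow_one,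
    ← Real.sqrt_eq_rpow]

lemma myrpow52 : (2:ℝ) ^ ((5:ℝ)/2) = 4 * Real.sqrt 2 := by
  rw [show (5/2:ℝ) = 2 + 1/2 by norm_num, Real.rpow_add two_pos, ← Real.sqrt_eq_rpow,
    show (2:ℝ) ^ (2:ℝ) = 4 by rw [show (2:ℝ) = ((2:ℕ):ℝ) by norm_num, Real.rpow_natCast]; norm_num]

lemma myI2 : ∫ x : ℝ, x ^ 2 * rexp (-2⁻¹ * x ^ 2) = Real.sqrt (2 * π) := by
  have h := mygauss_moment 1
  norm_num at h ⊢
  rw [h, show ((1:ℝ)/2) = 2⁻¹ by norm_num, myrpow_inv_neg, myrpow32, myGamma32]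
  ring

lemma myI4 : ∫ x : ℝ, x ^ 4 * rexp (-2⁻¹ * x ^ 2) = 3 * Real.sqrt (2 * π) := by
  have h := mygauss_moment 2
  norm_num at h ⊢
  rw [h, show ((1:ℝ)/2) = 2⁻¹ by norm_num, myrpow_inv_neg, myrpow52, myGamma52]
  ring

lemma mypdf_eq (x : ℝ) :
    gaussianPDFReal 0 1 x = (Real.sqrt (2 * π))⁻¹ * rexp (-2⁻¹ * x ^ 2) := by
  simp only [gaussianPDFReal, NNReal.coe_one, mul_one, sub_zero]
  congr 1
  ring

lemma mypdf_coe : gaussianPDF 0 1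
    = fun x => ((Real.toNNReal (gaussianPDFReal 0 1 x) : ℝ≥0) : ℝ≥0∞) := rfl

lemma mysqrt_ne : Real.sqrt (2 * π) ≠ 0 :=
  ne_of_gt (Real.sqrt_pos.mpr (by positivity))

lemma mygauss_integral (f : ℝ → ℝ) :
    ∫ x, f x ∂(gaussianReal 0 1) = ∫ x, gaussianPDFReal 0 1 x * f x := by
  rw [gaussianReal_of_var_ne_zero 0 one_ne_zero, mypdf_coe,
    integral_withDensity_eq_integral_smul (measurable_gaussianPDFReal 0 1).real_toNNReal f]
  congr 1
  ext x
  simp [NNReal.smul_def, Real.coe_toNNReal _ (gaussianPDFReal_nonneg 0 1 x)]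

lemma mysmul_eq (n : ℕ) : (fun x : ℝ => (Real.toNNReal (gaussianPDFReal 0 1 x)) • x ^ n)
    = fun x : ℝ => (Real.sqrt (2 * π))⁻¹ * (x ^ n * rexp (-2⁻¹ * x ^ 2)) := by
  ext x
  rw [NNReal.smul_def, smul_eq_mul, Real.coe_toNNReal _ (gaussianPDFReal_nonneg 0 1 x),
    mypdf_eq]
  ring

lemma mygauss_integrable (n : ℕ) : Integrable (fun x : ℝ => x ^ n) (gaussianReal 0 1) := by
  rw [gaussianReal_of_var_ne_zero 0 one_ne_zero, mypdf_coe]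
  refine (integrable_withDensity_iff_integrable_smul (E := ℝ)
    (measurable_gaussianPDFReal 0 1).real_toNNReal).mpr ?_
  rw [mysmul_eq n]
  exact (myint_pow_exp n).const_mul _

lemma mymoment2 : ∫ x, x ^ 2 ∂(gaussianReal 0 1) = 1 := by
  rw [mygauss_integral]
  have h : ∀ x : ℝ, gaussianPDFReal 0 1 x * x ^ 2
      = (Real.sqrt (2 * π))⁻¹ * (x ^ 2 * rexp (-2⁻¹ * x ^ 2)) := fun x => by
    rw [mypdf_eq]; ring
  simp_rw [h]
  rw [integral_const_mul, myI2, inv_mul_cancel₀ mysqrt_ne]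

lemma mymoment4 : ∫ x, x ^ 4 ∂(gaussianReal 0 1) = 3 := by
  rw [mygauss_integral]
  have h : ∀ x : ℝ, gaussianPDFReal 0 1 x * x ^ 4
      = (Real.sqrt (2 * π))⁻¹ * (x ^ 4 * rexp (-2⁻¹ * x ^ 2)) := fun x => by
    rw [mypdf_eq]; ring
  simp_rw [h]
  rw [integral_const_mul, myI4]
  field_simp

lemma mymap_props {Ω : Type*} [MeasurableSpace Ω] (P : Measure Ω) (e : Ω → ℝ)
    (he : Measurable e) (hg : Measure.map e P = gaussianReal 0 1) (n : ℕ) :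
    Integrable (fun ω => e ω ^ n) P ∧ ∫ ω, e ω ^ n ∂P = ∫ x, x ^ n ∂(gaussianReal 0 1) := by
  have hae : AEMeasurable e P := he.aemeasurable
  have h1 : Integrable (fun x : ℝ => x ^ n) (Measure.map e P) := hg ▸ mygauss_integrable n
  constructor
  · exact (integrable_map_measure h1.aestronglyMeasurable hae).mp h1
  · rw [← hg, integral_map hae h1.aestronglyMeasurable]



/-- for an arbitrary measurable data-dependent index `τ` in
`{0,…,D}`, for any `1 ≤ m ≤ D`, if `V_m ≥ 200·R(μ,τ)²` then
`P_μ(τ ≥ m) ≤ 0.9`. -/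
theorem lower_stop_probability
    {Ω : Type*} [MeasurableSpace Ω] (P : Measure Ω) [IsProbabilityMeasure P]
    (D : ℕ) (lam μ : ℕ → ℝ) (δ : ℝ) (hδ : 0 < δ)
    (hlam_pos : ∀ i, 1 ≤ i → i ≤ D → 0 < lam i)
    (hlam_mono : ∀ i j, 1 ≤ i → i ≤ j → j ≤ D → lam j ≤ lam i)
    (ε : ℕ → Ω → ℝ) (hεmeas : ∀ i, Measurable (ε i))
    (hεindep : iIndepFun ε P)
    (hεgauss : ∀ i, Measure.map (ε i) P = gaussianReal 0 1)
    (τ : (ℕ → ℝ) → ℕ) (hτmeas : Measurable τ) (hτD : ∀ y, τ y ≤ D)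
    (m : ℕ) (hm1 : 1 ≤ m) (hmD : m ≤ D)
    (hVm : δ ^ 2 * ∑ i ∈ Finset.Icc 1 m, ((lam i)⁻¹) ^ 2
        ≥ 200 * svdRisk P D lam δ ε τ μ) :
    (P {ω | m ≤ τ (fun j => if 1 ≤ j ∧ j ≤ D then lam j * μ j + δ * ε j ω else 0)}).toReal
      ≤ 0.9 := by
  classical
  set Y : Ω → ℕ → ℝ := fun ω j => if 1 ≤ j ∧ j ≤ D then lam j * μ j + δ * ε j ω else 0
    with hY
  have hYmeas : Measurable Y := by
    refine measurable_pi_lambda _ (fun j => ?_)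
    by_cases h : 1 ≤ j ∧ j ≤ D
    · simp only [hY, if_pos h]
      exact measurable_const.add ((hεmeas j).const_mul δ)
    · simp only [hY, if_neg h]
      exact measurable_const
  set T : Ω → ℕ := fun ω => τ (Y ω) with hTdef
  have hT : Measurable T := hτmeas.comp hYmeas
  set A : Set Ω := {ω | m ≤ T ω} with hAdef
  have hA : MeasurableSet A := hT measurableSet_Ici
  -- second and fourth moments
  have hsq : ∀ i : ℕ, Integrable (fun ω => ε i ω ^ 2) P ∧ ∫ ω, ε i ω ^ 2 ∂P = 1 := by
    intro i
    obtain ⟨h1, h2⟩ := mymap_props P (ε i) (hεmeas i) (hεgauss i) 2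
    exact ⟨h1, by rw [h2, mymoment2]⟩
  have hp4 : ∀ i : ℕ, Integrable (fun ω => ε i ω ^ 4) P ∧ ∫ ω, ε i ω ^ 4 ∂P = 3 := by
    intro i
    obtain ⟨h1, h2⟩ := mymap_props P (ε i) (hεmeas i) (hεgauss i) 4
    exact ⟨h1, by rw [h2, mymoment4]⟩
  set a : ℕ → ℝ := fun i => δ ^ 2 * ((lam i)⁻¹) ^ 2 with hadef
  have ha_nonneg : ∀ i, 0 ≤ a i := fun i => by positivity
  set X : Ω → ℝ := fun ω => ∑ i ∈ Finset.Icc 1 m, a i * ε i ω ^ 2 with hXdef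
  have hX_int : Integrable X P :=
    integrable_finset_sum _ (fun i _ => ((hsq i).1.const_mul (a i)))
  have hX_nonneg : ∀ ω, 0 ≤ X ω := fun ω =>
    Finset.sum_nonneg fun i _ => mul_nonneg (ha_nonneg i) (sq_nonneg _)
  set V : ℝ := ∑ i ∈ Finset.Icc 1 m, a i with hVdef
  have hX_val : ∫ ω, X ω ∂P = V := by
    rw [hXdef, integral_finset_sum _ (fun i _ => ((hsq i).1.const_mul (a i)))]
    refine Finset.sum_congr rfl fun i _ => ?_
    rw [integral_const_mul, (hsq i).2, mul_one]
  have hVpos : 0 < V := by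
    refine Finset.sum_pos (fun i hi => ?_) ⟨1, by simp [hm1]⟩
    obtain ⟨hi1, him⟩ := Finset.mem_Icc.mp hi
    have := hlam_pos i hi1 (le_trans him hmD)
    positivity
  -- rewrite the risk
  set f : Ω → ℝ :=
    fun ω => ∑ i ∈ Finset.Icc 1 D, (if i ≤ T ω then a i * ε i ω ^ 2 else μ i ^ 2) with hfdef
  have hrisk : svdRisk P D lam δ ε τ μ = ∫ ω, f ω ∂P := by
    unfold svdRisk
    refine integral_congr_ae (ae_of_all _ fun ω => ?_)
    refine Finset.sum_congr rfl fun i hi => ?_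
    obtain ⟨hi1, hiD⟩ := Finset.mem_Icc.mp hi
    have hlam := hlam_pos i hi1 hiD
    have hTY : τ (fun j => if 1 ≤ j ∧ j ≤ D then lam j * μ j + δ * ε j ω else 0) = T ω := rfl
    rw [hTY]
    by_cases h : i ≤ T ω
    · rw [if_pos h, if_pos h]
      have h1 : (lam i)⁻¹ * (lam i * μ i + δ * ε i ω) - μ i = δ * (lam i)⁻¹ * ε i ω := by
        field_simp
        ring
      rw [h1, hadef]
      ring
    · rw [if_neg h, if_neg h]
      ring
  have hf_meas : Measurable f := by
    refine Finset.measurable_sum _ fun i _ => ?_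
    exact Measurable.ite (hT measurableSet_Ici)
      (((hεmeas i).pow_const 2).const_mul (a i)) measurable_const
  have hf_nonneg : ∀ ω, 0 ≤ f ω := fun ω =>
    Finset.sum_nonneg fun i _ => by
      split_ifs
      · exact mul_nonneg (ha_nonneg i) (sq_nonneg _)
      · exact sq_nonneg _
  have hg_int : Integrable (fun ω => ∑ i ∈ Finset.Icc 1 D, (a i * ε i ω ^ 2 + μ i ^ 2)) P :=
    integrable_finset_sum _
      (fun i _ => ((hsq i).1.const_mul (a i)).add (integrable_const _))
  have hf_int : Integrable f P := by
    refine hg_int.mono' hf_meas.aestronglyMeasurable (ae_of_all _ fun ω => ?_)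
    rw [Real.norm_of_nonneg (hf_nonneg ω)]
    refine Finset.sum_le_sum fun i _ => ?_
    split_ifs
    · exact le_add_of_nonneg_right (sq_nonneg _)
    · exact le_add_of_nonneg_left (mul_nonneg (ha_nonneg i) (sq_nonneg _))
  -- lower bound on the risk
  have hlow : ∀ ω ∈ A, X ω ≤ f ω := by
    intro ω hω
    have hm' : m ≤ T ω := hω
    calc X ω = ∑ i ∈ Finset.Icc 1 m, (if i ≤ T ω then a i * ε i ω ^ 2 else μ i ^ 2) := by
          refine Finset.sum_congr rfl fun i hi => ?_
          rw [if_pos (le_trans (Finset.mem_Icc.mp hi).2 hm')]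
      _ ≤ f ω := by
          refine Finset.sum_le_sum_of_subset_of_nonneg
            (Finset.Icc_subset_Icc_right hmD) (fun i _ _ => ?_)
          split_ifs
          · exact mul_nonneg (ha_nonneg i) (sq_nonneg _)
          · exact sq_nonneg _
  have step1 : ∫ ω in A, X ω ∂P ≤ ∫ ω, f ω ∂P :=
    le_trans (setIntegral_mono_on hX_int.integrableOn hf_int.integrableOn hA hlow)
      (setIntegral_le_integral hf_int (ae_of_all _ hf_nonneg))
  have hsplit : ∫ ω in A, X ω ∂P = V - ∫ ω in Aᶜ, X ω ∂P := by
    have h := integral_add_compl hA hX_int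
    rw [hX_val] at h
    linarith
  set p : ℝ := (P Aᶜ).toReal with hpdef
  have hp_nonneg : 0 ≤ p := ENNReal.toReal_nonneg
  -- bound the integral over the complement
  have hcompl_i : ∀ i : ℕ, ∫ ω in Aᶜ, ε i ω ^ 2 ∂P ≤ p + 3 / 4 := by
    intro i
    have hφ_int : Integrable (fun ω => 1 + ε i ω ^ 4 / 4) P :=
      (integrable_const 1).add ((hp4 i).1.div_const 4)
    have h1 : ∫ ω in Aᶜ, ε i ω ^ 2 ∂P ≤ ∫ ω in Aᶜ, (1 + ε i ω ^ 4 / 4) ∂P := by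
      refine setIntegral_mono_on (hsq i).1.integrableOn hφ_int.integrableOn hA.compl
        (fun ω _ => ?_)
      nlinarith [sq_nonneg (ε i ω ^ 2 - 2)]
    have h2 : ∫ ω in Aᶜ, (1 + ε i ω ^ 4 / 4) ∂P
        = p + (∫ ω in Aᶜ, ε i ω ^ 4 ∂P) / 4 := by
      rw [integral_add (integrable_const 1).integrableOn ((hp4 i).1.div_const 4).integrableOn]
      rw [setIntegral_const, integral_div]
      simp [hpdef, smul_eq_mul, measureReal_def]
    have h3 : ∫ ω in Aᶜ, ε i ω ^ 4 ∂P ≤ 3 := by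
      rw [← (hp4 i).2]
      exact setIntegral_le_integral (hp4 i).1 (ae_of_all _ fun ω => by positivity)
    rw [h2] at h1
    linarith
  have hcompl : ∫ ω in Aᶜ, X ω ∂P ≤ (p + 3 / 4) * V := by
    have h1 : ∫ ω in Aᶜ, X ω ∂P = ∑ i ∈ Finset.Icc 1 m, a i * ∫ ω in Aᶜ, ε i ω ^ 2 ∂P := by
      rw [hXdef, integral_finset_sum _ (fun i _ => ((hsq i).1.const_mul (a i)).integrableOn)]
      exact Finset.sum_congr rfl fun i _ => integral_const_mul _ _
    rw [h1]
    calc ∑ i ∈ Finset.Icc 1 m, a i * ∫ ω in Aᶜ, ε i ω ^ 2 ∂P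
        ≤ ∑ i ∈ Finset.Icc 1 m, a i * (p + 3 / 4) :=
          Finset.sum_le_sum fun i _ => mul_le_mul_of_nonneg_left (hcompl_i i) (ha_nonneg i)
      _ = (p + 3 / 4) * V := by rw [← Finset.sum_mul, mul_comm]
  -- combine everything
  have hfinal : V - (p + 3 / 4) * V ≤ svdRisk P D lam δ ε τ μ := by
    rw [hrisk]
    linarith [step1, hsplit, hcompl]
  have hV200 : 200 * svdRisk P D lam δ ε τ μ ≤ V := by
    have hVf : V = δ ^ 2 * ∑ i ∈ Finset.Icc 1 m, ((lam i)⁻¹) ^ 2 := by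
      rw [hVdef, hadef, Finset.mul_sum]
    linarith [hVm]
  have hp49 : 49 / 200 ≤ p := by nlinarith [hfinal, hV200, hVpos]
  have hPA : (P A).toReal + p = 1 := by
    rw [hpdef, ← ENNReal.toReal_add (measure_ne_top P A) (measure_ne_top P Aᶜ),
      measure_add_measure_compl hA, measure_univ, ENNReal.toReal_one]
  norm_num
  linarith [hPA, hp49]
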